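/- Let k = pn with 0 < p ≤ 1 and let F be an m-by-n unit-norm frame. Then the normalized expected cross-correlation I²_rms(FP) = (m₂/p − 1)/(k − 1) satisfies I²_rms(FP) ≥ (k/m − k/n)/(k − 1), where m₂ = (1/n)E[tr((FPF')²)] and P = diag of i.i.d. Bernoulli(p). -/

import Mathlib

open Matrix BigOperators Finset

/-- Probability weight of a Bernoulli(p) selection pattern `ε`. -/
noncomputable def berWeight (n : ℕ) (p : ℝ) (ε : Fin n → Bool) : ℝ :=
  ∏ i, if ε i then p else 1 - p

/-- The diagonal 0/1 selection matrix `P` determined by `ε`. -/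
noncomputable def selMat (n : ℕ) (ε : Fin n → Bool) : Matrix (Fin n) (Fin n) ℂ :=
  Matrix.diagonal (fun i => if ε i then (1 : ℂ) else 0)

/-- Expected `d`-th moment `(1/n)·E[tr((FPF')^d)]` of a Bernoulli(p) subframe. -/
noncomputable def expMoment (m n : ℕ) (p : ℝ) (F : Matrix (Fin m) (Fin n) ℂ)
    (d : ℕ) : ℝ :=
  (1 / (n : ℝ)) *
    ∑ ε : Fin n → Bool, berWeight n p ε *
      (Matrix.trace ((F * selMat n ε * Fᴴ) ^ d)).re

lemma sum_fn_bool {n : ℕ} (g : Fin n → Bool → ℝ) :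
    ∑ ε : Fin n → Bool, ∏ i, g i (ε i) = ∏ i, ∑ b, g i b :=
  (Fintype.prod_sum g).symm

lemma berCoef {n : ℕ} (p : ℝ) (i j : Fin n) :
    ∑ ε : Fin n → Bool, berWeight n p ε *
      ((if ε i then (1:ℝ) else 0) * (if ε j then (1:ℝ) else 0))
      = if i = j then p else p^2 := by
  classical
  have h1 : ∀ ε : Fin n → Bool, berWeight n p ε *
      ((if ε i then (1:ℝ) else 0) * (if ε j then (1:ℝ) else 0))
      = ∏ k, ((if ε k then p else 1 - p) *
          ((if k = i then (if ε k then (1:ℝ) else 0) else 1) *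
           (if k = j then (if ε k then (1:ℝ) else 0) else 1))) := by
    intro ε
    rw [Finset.prod_mul_distrib, Finset.prod_mul_distrib,
        Finset.prod_ite_eq' Finset.univ i, Finset.prod_ite_eq' Finset.univ j]
    simp [berWeight]
  simp_rw [h1]
  rw [sum_fn_bool (fun k b => (if b then p else 1 - p) *
      ((if k = i then (if b then (1:ℝ) else 0) else 1) *
       (if k = j then (if b then (1:ℝ) else 0) else 1)))]
  have h2 : ∀ k : Fin n, (∑ b : Bool, ((if b then p else 1 - p) *
      ((if k = i then (if b then (1:ℝ) else 0) else 1) *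
       (if k = j then (if b then (1:ℝ) else 0) else 1))))
      = if k = i ∨ k = j then p else 1 := by
    intro k
    by_cases hki : k = i <;> by_cases hkj : k = j <;>
      simp [hki, hkj, Fintype.sum_bool] <;> ring
  simp_rw [h2]
  by_cases hij : i = j
  · subst hij
    simp_rw [or_self]
    rw [Finset.prod_ite_eq' Finset.univ i]
    simp
  · have h3 : ∀ k : Fin n, (if k = i ∨ k = j then p else 1)
        = if k ∈ ({i, j} : Finset (Fin n)) then p else 1 := by
      intro k; simp
    simp_rw [h3]
    rw [Finset.prod_ite_mem, Finset.univ_inter, Finset.prod_const,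
        Finset.card_insert_of_notMem (by simp [hij]), Finset.card_singleton]
    simp [hij]

lemma trace_re_eq {m n : ℕ} (F : Matrix (Fin m) (Fin n) ℂ) (ε : Fin n → Bool) :
    (Matrix.trace ((F * selMat n ε * Fᴴ) ^ 2)).re
      = ∑ i, ∑ j, ((if ε i then (1:ℝ) else 0) * (if ε j then (1:ℝ) else 0))
          * Complex.normSq ((Fᴴ * F) i j) := by
  classical
  have hcyc : Matrix.trace ((F * selMat n ε * Fᴴ) ^ 2)
      = Matrix.trace ((selMat n ε * (Fᴴ * F)) * (selMat n ε * (Fᴴ * F))) := by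
    rw [pow_two]
    rw [show (F * selMat n ε * Fᴴ) * (F * selMat n ε * Fᴴ)
        = F * (selMat n ε * (Fᴴ * F) * (selMat n ε * Fᴴ)) by
      simp only [Matrix.mul_assoc]]
    rw [Matrix.trace_mul_comm]
    simp only [Matrix.mul_assoc]
  rw [hcyc]
  set G := Fᴴ * F with hG
  have hherm : ∀ i j, G j i = star (G i j) := by
    intro i j
    have h := congrFun (congrFun (Matrix.isHermitian_conjTranspose_mul_self F) i) j
    rw [Matrix.conjTranspose_apply] at h
    rw [hG]
    rw [← h, star_star]
  have hA : ∀ i j, (selMat n ε * G) i j = (if ε i then (1:ℂ) else 0) * G i j := by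
    intro i j
    simp [selMat, Matrix.diagonal_mul]
  rw [Matrix.trace]
  simp only [Matrix.diag_apply, Matrix.mul_apply, hA]
  rw [Complex.re_sum]
  apply Finset.sum_congr rfl
  intro i _
  rw [Complex.re_sum]
  apply Finset.sum_congr rfl
  intro j _
  rw [hherm i j]
  by_cases hi : ε i <;> by_cases hj : ε j <;>
    simp [hi, hj, Complex.mul_conj]

lemma frob {α β : Type*} [Fintype α] [Fintype β] (M : Matrix α β ℂ) :
    (Matrix.trace (M * Mᴴ)).re = ∑ a, ∑ b, Complex.normSq (M a b) := by
  rw [Matrix.trace]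
  simp only [Matrix.diag_apply, Matrix.mul_apply, Matrix.conjTranspose_apply]
  rw [Complex.re_sum]
  refine Finset.sum_congr rfl fun a _ => ?_
  rw [Complex.re_sum]
  refine Finset.sum_congr rfl fun b _ => ?_
  simp [Complex.mul_conj]

lemma welchT {m n : ℕ} (F : Matrix (Fin m) (Fin n) ℂ)
    (hcol : ∀ i, (Fᴴ * F) i i = 1) :
    (n:ℝ)^2 ≤ (m:ℝ) * ∑ i, ∑ j, Complex.normSq ((Fᴴ * F) i j) := by
  classical
  set G := Fᴴ * F with hG
  set H := F * Fᴴ with hH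
  have hTr : Matrix.trace (G * Gᴴ) = Matrix.trace (H * Hᴴ) := by
    rw [(Matrix.isHermitian_conjTranspose_mul_self F).eq,
        (Matrix.isHermitian_mul_conjTranspose_self F).eq, hG, hH]
    rw [show (Fᴴ * F) * (Fᴴ * F) = Fᴴ * (F * Fᴴ * F) by simp only [Matrix.mul_assoc]]
    rw [Matrix.trace_mul_comm]
    simp only [Matrix.mul_assoc]
  have hHaa : ∀ a, H a a = ((∑ j, Complex.normSq (F a j) : ℝ) : ℂ) := by
    intro a
    push_cast
    simp [hH, Matrix.mul_apply, Matrix.conjTranspose_apply, Complex.mul_conj]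
  have hre : ∑ a, (H a a).re = (n:ℝ) := by
    have h2 : Matrix.trace H = Matrix.trace G := Matrix.trace_mul_comm F Fᴴ
    have h3 : (Matrix.trace H).re = ∑ a, (H a a).re := by
      rw [Matrix.trace, Complex.re_sum]; rfl
    have h4 : (Matrix.trace G).re = (n:ℝ) := by
      rw [Matrix.trace, Complex.re_sum]
      simp [Matrix.diag_apply, hcol]
    rw [← h3, h2, h4]
  have hT : ∑ i, ∑ j, Complex.normSq (G i j) = ∑ a, ∑ b, Complex.normSq (H a b) := by
    rw [← frob G, ← frob H, hTr]
  have hdiag : ∑ a, ((H a a).re)^2 ≤ ∑ a, ∑ b, Complex.normSq (H a b) := by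
    apply Finset.sum_le_sum
    intro a _
    have h5 : ((H a a).re)^2 = Complex.normSq (H a a) := by
      rw [hHaa a]; simp [Complex.normSq_apply]; ring
    rw [h5]
    exact Finset.single_le_sum (fun b _ => Complex.normSq_nonneg _) (Finset.mem_univ a)
  have hcs : ((n:ℝ))^2 ≤ (m:ℝ) * ∑ a, ((H a a).re)^2 := by
    have := sq_sum_le_card_mul_sum_sq (s := (Finset.univ : Finset (Fin m)))
      (f := fun a => (H a a).re)
    rw [hre] at this
    simpa using this
  calc (n:ℝ)^2 ≤ (m:ℝ) * ∑ a, ((H a a).re)^2 := hcs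
    _ ≤ (m:ℝ) * ∑ a, ∑ b, Complex.normSq (H a b) := by
        apply mul_le_mul_of_nonneg_left hdiag (by positivity)
    _ = (m:ℝ) * ∑ i, ∑ j, Complex.normSq (G i j) := by rw [hT]


theorem erasure_welch_stmt14 (m n : ℕ) (hm : 1 ≤ m) (hmn : m ≤ n)
    (p : ℝ) (hp0 : 0 < p) (hp1 : p ≤ 1)
    (hk : 1 < p * n)
    (F : Matrix (Fin m) (Fin n) ℂ)
    (hcol : ∀ i, (Fᴴ * F) i i = 1) :
    let k : ℝ := p * n
    (k / m - k / n) / (k - 1) ≤ (expMoment m n p F 2 / p - 1) / (k - 1) := by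
  classical
  intro k
  have hn : 1 ≤ n := le_trans hm hmn
  have hn' : (0:ℝ) < n := by exact_mod_cast Nat.lt_of_lt_of_le Nat.zero_lt_one hn
  have hm' : (0:ℝ) < m := by exact_mod_cast Nat.lt_of_lt_of_le Nat.zero_lt_one hm
  set T : ℝ := ∑ i, ∑ j, Complex.normSq ((Fᴴ * F) i j) with hTdef
  have hT : (n:ℝ)^2 ≤ (m:ℝ) * T := welchT F hcol
  have hT0 : 0 ≤ T := Finset.sum_nonneg fun i _ =>
    Finset.sum_nonneg fun j _ => Complex.normSq_nonneg _
  -- compute the expectation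
  have hE : ∑ ε : Fin n → Bool, berWeight n p ε *
      (Matrix.trace ((F * selMat n ε * Fᴴ) ^ 2)).re
      = p^2 * T + (p - p^2) * n := by
    have step1 : ∑ ε : Fin n → Bool, berWeight n p ε *
        (Matrix.trace ((F * selMat n ε * Fᴴ) ^ 2)).re
        = ∑ i, ∑ j, (if i = j then p else p^2) * Complex.normSq ((Fᴴ*F) i j) := by
      simp_rw [trace_re_eq, Finset.mul_sum]
      rw [Finset.sum_comm]
      refine Finset.sum_congr rfl fun i _ => ?_
      rw [Finset.sum_comm]
      refine Finset.sum_congr rfl fun j _ => ?_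
      have h6 : ∑ ε : Fin n → Bool, berWeight n p ε *
          (((if ε i then (1:ℝ) else 0) * (if ε j then (1:ℝ) else 0))
            * Complex.normSq ((Fᴴ*F) i j))
          = (∑ ε : Fin n → Bool, berWeight n p ε *
              ((if ε i then (1:ℝ) else 0) * (if ε j then (1:ℝ) else 0)))
            * Complex.normSq ((Fᴴ*F) i j) := by
        rw [Finset.sum_mul]
        exact Finset.sum_congr rfl fun ε _ => by ring
      rw [h6, berCoef]
    rw [step1]
    have step2 : ∀ i j : Fin n, (if i = j then p else p^2) *
        Complex.normSq ((Fᴴ*F) i j)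
        = p^2 * Complex.normSq ((Fᴴ*F) i j)
          + (if i = j then (p - p^2) * Complex.normSq ((Fᴴ*F) i j) else 0) := by
      intro i j
      by_cases h : i = j
      · simp only [h, if_true]; ring
      · simp [h]
    simp_rw [step2, Finset.sum_add_distrib, Finset.sum_ite_eq, Finset.mem_univ,
      if_true, ← Finset.mul_sum]
    have hdiag : ∑ i, Complex.normSq ((Fᴴ*F) i i) = (n:ℝ) := by
      have : ∀ i : Fin n, Complex.normSq ((Fᴴ*F) i i) = 1 := by
        intro i; rw [hcol i]; simp
      simp [this]
    rw [hdiag]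
  -- final arithmetic
  have hMex : expMoment m n p F 2 = p^2 * T / n + (p - p^2) := by
    rw [expMoment, hE]
    field_simp
  have hk1 : (0:ℝ) < k - 1 := by simpa [k] using sub_pos.mpr hk
  rw [div_le_div_iff_of_pos_right hk1]
  have hquot : expMoment m n p F 2 / p - 1 = p * T / n - p := by
    rw [hMex]
    field_simp
    ring
  rw [hquot]
  have hfrac : k / m - k / n = p * n / m - p := by
    rw [show k / n = p by simp only [k]; exact mul_div_cancel_right₀ p hn'.ne']
  rw [hfrac]
  have : p * n / m ≤ p * T / n := by
    rw [div_le_div_iff₀ hm' hn']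
    nlinarith [hT, hp0.le]
  linarith
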